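/- Let Ψ and S be symmetric real m×m matrices with s := (tr S)/2 ≠ 0, p := tr(Ψ·Ψ) ≠ 0, satisfying Ψ·S = S·Ψ = s·Ψ, 2s·Ψ·Ψ = p·S, and S·S = s·S. Then every eigenvector of Ψ is an eigenvector of S, and every nonzero eigenvalue λ of Ψ satisfies λ² = p/2. -/

import Mathlib

open Matrix

theorem stmt_9 {m : ℕ} (Ψ S : Matrix (Fin m) (Fin m) ℝ)
    (hΨsymm : Ψ.IsSymm) (hSsymm : S.IsSymm)
    (s : ℝ) (hs : s = (Matrix.trace S) / 2) (hsne : s ≠ 0)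
    (p : ℝ) (hp : p = Matrix.trace (Ψ * Ψ)) (hpne : p ≠ 0)
    (h1 : Ψ * S = s • Ψ) (h1' : S * Ψ = s • Ψ)
    (h2 : (2 * s) • (Ψ * Ψ) = p • S)
    (h3 : S * S = s • S) :
    ∀ (lam : ℝ) (ξ : Fin m → ℝ), ξ ≠ 0 → Ψ.mulVec ξ = lam • ξ →
      (∃ μ : ℝ, S.mulVec ξ = μ • ξ) ∧ (lam ≠ 0 → lam ^ 2 = p / 2) := by
  intro lam ξ hxne hx
  have hΨΨ : (Ψ * Ψ).mulVec ξ = (lam * lam) • ξ := by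
    rw [← Matrix.mulVec_mulVec, hx, Matrix.mulVec_smul, hx, smul_smul]
  have hkey : p • S.mulVec ξ = (2 * s * (lam * lam)) • ξ := by
    have := congrArg (fun M => Matrix.mulVec M ξ) h2
    simp only [Matrix.smul_mulVec, hΨΨ] at this
    rw [← this, smul_smul]
  have hSx : S.mulVec ξ = (2 * s * (lam * lam) / p) • ξ := by
    have := congrArg (fun v => p⁻¹ • v) hkey
    simpa [smul_smul, inv_mul_cancel₀ hpne, div_eq_inv_mul, mul_comm] using this
  refine ⟨⟨_, hSx⟩, fun hlam => ?_⟩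
  -- S (Ψ ξ) = s Ψ ξ gives lam • S ξ = (s*lam) • ξ
  have h4 : lam • S.mulVec ξ = (s * lam) • ξ := by
    have := congrArg (fun M => Matrix.mulVec M ξ) h1'
    simp only [Matrix.smul_mulVec] at this
    rw [← Matrix.mulVec_mulVec, hx, Matrix.mulVec_smul] at this
    rw [this, smul_smul]
  have hSx2 : S.mulVec ξ = s • ξ := by
    have := congrArg (fun v => lam⁻¹ • v) h4
    simp only [smul_smul, inv_mul_cancel₀ hlam, one_smul] at this
    rw [this]
    congr 1
    field_simp
  have : (2 * s * (lam * lam) / p) • ξ = s • ξ := by rw [← hSx, hSx2]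
  have hcoef : 2 * s * (lam * lam) / p = s := by
    by_contra hne
    exact hxne (by
      have h0 : (2 * s * (lam * lam) / p - s) • ξ = 0 := by
        rw [sub_smul, this, sub_self]
      exact (smul_eq_zero.mp h0).resolve_left (sub_ne_zero.mpr hne))
  have : 2 * s * (lam * lam) = s * p := by
    field_simp at hcoef; linear_combination s * hcoef
  have := mul_left_cancel₀ hsne (by linarith : s * (2 * (lam*lam)) = s * p)
  nlinarith [this]
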